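/- For integers 1 ≤ m ≤ n, the sum over k from m to n of [n,k] * {k,m} * (-2)^(n-k) equals ((n-1)!/(m-1)!) * C(-n, n-m) * 2^(m-n), where C(-n, n-m) = (-1)^(n-m) C(2n-m-1, n-m). -/

import Mathlib

open Finset

/-- Unsigned Stirling numbers of the first kind. -/
def stirling1 : ℕ → ℕ → ℕ
  | 0, 0 => 1
  | 0, _ + 1 => 0
  | _ + 1, 0 => 0
  | n + 1, k + 1 => n * stirling1 n (k + 1) + stirling1 n k

/-- Stirling numbers of the second kind. -/
def stirling2 : ℕ → ℕ → ℕ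
  | 0, 0 => 1
  | 0, _ + 1 => 0
  | _ + 1, 0 => 0
  | n + 1, k + 1 => (k + 1) * stirling2 n (k + 1) + stirling2 n k

/-- Generalized binomial coefficient `C(x, r) = x(x-1)⋯(x-r+1)/r!` in a ℚ-algebra. -/
noncomputable def gchoose {R : Type*} [CommRing R] [Algebra ℚ R] (x : R) (r : ℕ) : R :=
  algebraMap ℚ R ((r.factorial : ℚ)⁻¹) * ∏ i ∈ Finset.range r, (x - i)

lemma stirling2_eq_zero {k m : ℕ} (h : k < m) : stirling2 k m = 0 := by
  induction k generalizing m with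
  | zero => cases m with
    | zero => omega
    | succ m => rfl
  | succ k ih =>
    cases m with
    | zero => omega
    | succ m =>
      have h1 : k < m + 1 := by omega
      have h2 : k < m := by omega
      simp [stirling2, ih h1, ih h2]

lemma stirling1_eq_zero {n k : ℕ} (h : n < k) : stirling1 n k = 0 := by
  induction n generalizing k with
  | zero => cases k with
    | zero => omega
    | succ k => rfl
  | succ n ih =>
    cases k with
    | zero => omega
    | succ k =>
      have h1 : n < k + 1 := by omega
      have h2 : n < k := by omega
      simp [stirling1, ih h1, ih h2]

noncomputable def Fsum (n m : ℕ) : ℚ :=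
  ∑ k ∈ Finset.range (n + 1), (stirling1 n k : ℚ) * stirling2 k m * (-2 : ℚ) ^ (n - k)

noncomputable def Hq (s a : ℕ) : ℚ :=
  (-1 : ℚ) ^ a * (2 * a + s).factorial / (s.factorial * a.factorial * 2 ^ a)

lemma Hq_zero (s : ℕ) : Hq s 0 = 1 := by
  have h : (s.factorial : ℚ) ≠ 0 := by positivity
  simp [Hq]
  exact Nat.factorial_ne_zero s

lemma Hq_rec1 (a : ℕ) : Hq 0 (a + 1) = -(2 * (a : ℚ) + 1) * Hq 0 a := by
  have h : 2 * (a + 1) + 0 = (2 * a + 0) + 1 + 1 := by ring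
  rw [Hq, Hq, h, Nat.factorial_succ, Nat.factorial_succ, Nat.factorial_succ]
  have h2 : (a.factorial : ℚ) ≠ 0 := by positivity
  have h3 : ((2 * a + 0).factorial : ℚ) ≠ 0 := by positivity
  field_simp
  push_cast
  ring

lemma Hq_rec2 (s a : ℕ) :
    Hq (s + 1) (a + 1) = -((s : ℚ) + 2 * a + 2) * Hq (s + 1) a + Hq s (a + 1) := by
  have h : 2 * (a + 1) + (s + 1) = (2 * a + (s + 1)) + 1 + 1 := by ring
  have h' : 2 * (a + 1) + s = (2 * a + (s + 1)) + 1 := by ring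
  rw [Hq, Hq, Hq, h, h', Nat.factorial_succ, Nat.factorial_succ,
    Nat.factorial_succ a, Nat.factorial_succ s]
  have h2 : (a.factorial : ℚ) ≠ 0 := by positivity
  have h3 : (s.factorial : ℚ) ≠ 0 := by positivity
  have h4 : ((2 * a + (s + 1)).factorial : ℚ) ≠ 0 := by positivity
  field_simp
  push_cast
  ring

lemma aux_shift (n t : ℕ) :
    ∑ i ∈ Finset.range (n + 1),
        (stirling1 n (i + 1) : ℚ) * stirling2 (i + 1) (t + 1) * (-2 : ℚ) ^ (n - i) =
      -2 * Fsum n (t + 1) := by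
  rw [Fsum, Finset.sum_range_succ, Finset.mul_sum, Finset.sum_range_succ']
  rw [stirling1_eq_zero (by omega : n < n + 1)]
  rw [stirling2_eq_zero (by omega : 0 < t + 1)]
  simp only [Nat.cast_zero, zero_mul, mul_zero, add_zero, zero_mul, mul_zero]
  apply Finset.sum_congr rfl
  intro i hi
  rw [Finset.mem_range] at hi
  have h : n - i = (n - (i + 1)) + 1 := by omega
  rw [h, pow_succ]
  ring

lemma Frec (n t : ℕ) :
    Fsum (n + 1) (t + 1) =
      ((t : ℚ) + 1 - 2 * n) * Fsum n (t + 1) + Fsum n t := by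
  have e1 : Fsum (n + 1) (t + 1) =
      ∑ i ∈ Finset.range (n + 1),
        (stirling1 (n + 1) (i + 1) : ℚ) * stirling2 (i + 1) (t + 1) * (-2 : ℚ) ^ (n - i) := by
    rw [Fsum, Finset.sum_range_succ']
    have h0 : stirling1 (n + 1) 0 = 0 := rfl
    rw [h0]
    simp only [Nat.cast_zero, zero_mul, add_zero]
    apply Finset.sum_congr rfl
    intro i _
    rw [Nat.succ_sub_succ]
  rw [e1]
  have e2 : ∀ i, (stirling1 (n + 1) (i + 1) : ℚ) * stirling2 (i + 1) (t + 1)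
      * (-2 : ℚ) ^ (n - i) =
      (n : ℚ) * ((stirling1 n (i + 1) : ℚ) * stirling2 (i + 1) (t + 1) * (-2 : ℚ) ^ (n - i))
      + ((t : ℚ) + 1) * ((stirling1 n i : ℚ) * stirling2 i (t + 1) * (-2 : ℚ) ^ (n - i))
      + ((stirling1 n i : ℚ) * stirling2 i t * (-2 : ℚ) ^ (n - i)) := by
    intro i
    have hs1 : stirling1 (n + 1) (i + 1) = n * stirling1 n (i + 1) + stirling1 n i := rfl
    have hs2 : stirling2 (i + 1) (t + 1) = (t + 1) * stirling2 i (t + 1) + stirling2 i t := rfl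
    have hs2' : ((stirling2 (i + 1) (t + 1) : ℕ) : ℚ)
        = ((t : ℚ) + 1) * stirling2 i (t + 1) + stirling2 i t := by
      rw [hs2]; push_cast; ring
    rw [hs1]
    push_cast
    rw [hs2']
    ring
  rw [Finset.sum_congr rfl (fun i _ => e2 i)]
  rw [Finset.sum_add_distrib, Finset.sum_add_distrib, ← Finset.mul_sum, ← Finset.mul_sum]
  rw [aux_shift]
  rw [Fsum, Fsum]
  ring

lemma Fsum_zero_right {n : ℕ} (hn : 1 ≤ n) : Fsum n 0 = 0 := by
  rw [Fsum]
  apply Finset.sum_eq_zero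
  intro k _
  cases k with
  | zero =>
    cases n with
    | zero => omega
    | succ n => simp [stirling1]
  | succ k =>
    have : stirling2 (k + 1) 0 = 0 := rfl
    simp [this]

lemma Fsum_gt {n m : ℕ} (h : n < m) : Fsum n m = 0 := by
  rw [Fsum]
  apply Finset.sum_eq_zero
  intro k hk
  rw [Finset.mem_range] at hk
  rw [stirling2_eq_zero (by omega)]
  simp

lemma Fsum_zero_zero : Fsum 0 0 = 1 := by
  simp [Fsum, stirling1, stirling2]

lemma Fsum_eq_Hq : ∀ n m, 1 ≤ m → m ≤ n → Fsum n m = Hq (m - 1) (n - m) := by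
  intro n
  induction n with
  | zero => intro m h1 h2; omega
  | succ n ih =>
    intro m h1 h2
    obtain ⟨t, rfl⟩ : ∃ t, m = t + 1 := ⟨m - 1, by omega⟩
    rw [Frec]
    rcases Nat.lt_or_ge n (t + 1) with h | h
    · -- m = n + 1
      have ht : t = n := by omega
      subst ht
      rw [Fsum_gt (by omega)]
      cases t with
      | zero =>
        rw [Fsum_zero_zero]
        norm_num [Hq_zero]
      | succ s =>
        rw [ih (s + 1) (by omega) (by omega)]
        simp only [Nat.add_sub_cancel, Nat.sub_self]
        rw [Hq_zero, Hq_zero]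
        ring
    · -- t + 1 ≤ n
      cases t with
      | zero =>
        -- m = 1
        rw [Fsum_zero_right (by omega), ih 1 (by omega) (by omega)]
        obtain ⟨a, rfl⟩ : ∃ a, n = a + 1 := ⟨n - 1, by omega⟩
        norm_num
        rw [Hq_rec1]
        ring
      | succ s =>
        -- 2 ≤ m = s + 2 ≤ n
        rw [ih (s + 2) (by omega) (by omega), ih (s + 1) (by omega) (by omega)]
        obtain ⟨a, ha⟩ : ∃ a, n - (s + 2) = a := ⟨n - (s + 2), rfl⟩
        have h2 : n + 1 - (s + 2) = a + 1 := by omega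
        have h3 : n - (s + 1) = a + 1 := by omega
        have h4 : (n : ℚ) = s + a + 2 := by
          have : n = s + a + 2 := by omega
          rw [this]; push_cast; ring
        rw [ha, h2, h3]
        simp only [Nat.add_sub_cancel]
        rw [Hq_rec2, h4]
        push_cast
        ring

lemma prod_neg_descend (c : ℕ) : ∀ a : ℕ,
    ∏ i ∈ Finset.range a, (-((c : ℚ) + 1) - i) =
      (-1 : ℚ) ^ a * ((c + a).factorial : ℚ) / c.factorial := by
  intro a
  induction a with
  | zero =>
    have hc : ((c).factorial : ℚ) ≠ 0 := by positivity
    simp [div_self hc]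
  | succ a ih =>
    rw [Finset.prod_range_succ, ih]
    have h : ((c + (a + 1)).factorial : ℚ) = ((c + a : ℕ) + 1) * (c + a).factorial := by
      have : c + (a + 1) = (c + a) + 1 := by omega
      rw [this, Nat.factorial_succ]
      push_cast
      ring
    rw [h]
    have hc : ((c).factorial : ℚ) ≠ 0 := by positivity
    field_simp
    push_cast
    ring

lemma gchoose_eq (s a : ℕ) :
    gchoose (-(((s + 1 + a : ℕ) : ℚ))) a =
      (-1 : ℚ) ^ a * ((s + 2 * a).factorial : ℚ) / (a.factorial * (s + a).factorial) := by
  rw [gchoose]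
  have h1 : (-(((s + 1 + a : ℕ) : ℚ))) = -(((s + a : ℕ) : ℚ) + 1) := by push_cast; ring
  have h2 : ∀ i ∈ Finset.range a, (-(((s + 1 + a : ℕ) : ℚ)) - i) = (-(((s + a : ℕ) : ℚ) + 1) - i) := by
    intro i _; rw [h1]
  rw [Finset.prod_congr rfl h2, prod_neg_descend (s + a) a]
  have h3 : (s + a) + a = s + 2 * a := by omega
  rw [h3]
  have ha : ((a).factorial : ℚ) ≠ 0 := by positivity
  have hsa : (((s + a)).factorial : ℚ) ≠ 0 := by positivity
  simp only [map_inv₀, map_natCast]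
  field_simp

lemma rhs_eq (s a : ℕ) :
    (((s + a).factorial : ℚ)) / (s.factorial : ℚ) * gchoose (-(((s + 1 + a : ℕ) : ℚ))) a *
        (2 : ℚ) ^ (-(a : ℤ)) = Hq s a := by
  rw [gchoose_eq, Hq]
  have h2 : (2 : ℚ) ^ (-(a : ℤ)) = ((2 : ℚ) ^ a)⁻¹ := by
    rw [zpow_neg, zpow_natCast]
  rw [h2]
  have ha : ((a).factorial : ℚ) ≠ 0 := by positivity
  have hs : ((s).factorial : ℚ) ≠ 0 := by positivity
  have hsa : (((s + a)).factorial : ℚ) ≠ 0 := by positivity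
  have h3 : (2 * a + s) = (s + 2 * a) := by omega
  rw [h3]
  field_simp

theorem stmt7 (m n : ℕ) (hm : 1 ≤ m) (hmn : m ≤ n) :
    ∑ k ∈ Finset.Icc m n, (stirling1 n k : ℚ) * stirling2 k m * (-2 : ℚ) ^ (n - k) =
      ((n - 1).factorial : ℚ) / (m - 1).factorial * gchoose (-(n : ℚ)) (n - m) *
        (2 : ℚ) ^ ((m : ℤ) - n) := by
  have hsum : ∑ k ∈ Finset.Icc m n, (stirling1 n k : ℚ) * stirling2 k m * (-2 : ℚ) ^ (n - k)
      = Fsum n m := by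
    rw [Fsum]
    apply Finset.sum_subset
    · intro k hk
      rw [Finset.mem_Icc] at hk
      rw [Finset.mem_range]
      omega
    · intro k hk hk2
      rw [Finset.mem_range] at hk
      rw [Finset.mem_Icc] at hk2
      rw [stirling2_eq_zero (by omega)]
      simp
  rw [hsum, Fsum_eq_Hq n m hm hmn]
  obtain ⟨s, rfl⟩ : ∃ s, m = s + 1 := ⟨m - 1, by omega⟩
  obtain ⟨a, rfl⟩ : ∃ a, n = s + 1 + a := ⟨n - (s + 1), by omega⟩
  have e1 : s + 1 + a - 1 = s + a := by omega
  have e2 : s + 1 + a - (s + 1) = a := by omega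
  have e3 : s + 1 - 1 = s := by omega
  have e4 : ((s + 1 : ℕ) : ℤ) - ((s + 1 + a : ℕ) : ℤ) = -(a : ℤ) := by push_cast; ring
  rw [e1, e2, e3, e4, ← rhs_eq s a]
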